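/- Let D be a transitive acyclic digraph and let π be an arrangement of V(D) in non-increasing order of d⁺(v) − d⁻(v). Then π is a maximum arrangement: its signature coordinatewise dominates the signature of every other arrangement; in particular, for every k, the cut of π after position k has the maximum size among all directed cuts E(X,Y) of D with |X| = k. -/

import Mathlib

open Finset

/-- Integer value of an edge under an arrangement: max {0, π(head) − π(tail)}. -/
def edgeVal {n : ℕ} (π : Equiv.Perm (Fin n)) (e : Fin n × Fin n) : ℤ :=
  max 0 ((π e.2 : ℤ) - (π e.1 : ℤ))

/-- Value of an arrangement (integer version). -/
def arrVal {n : ℕ} (E : Finset (Fin n × Fin n)) (π : Equiv.Perm (Fin n)) : ℤ :=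
  ∑ e ∈ E, edgeVal π e

/-- Value of an arrangement (natural-number version, using truncated subtraction). -/
def valN {n : ℕ} (E : Finset (Fin n × Fin n)) (π : Equiv.Perm (Fin n)) : ℕ :=
  ∑ e ∈ E, ((π e.2 : ℕ) - (π e.1 : ℕ))

/-- Size of the k-th cut of an arrangement (positions are 0-indexed, cuts 1-indexed:
`cutAt E π k` counts edges from the first k vertices to the rest). -/
def cutAt {n : ℕ} (E : Finset (Fin n × Fin n)) (π : Equiv.Perm (Fin n)) (k : ℕ) : ℕ :=
  (E.filter (fun e => (π e.1 : ℕ) < k ∧ k ≤ (π e.2 : ℕ))).card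

def outdeg {n : ℕ} (E : Finset (Fin n × Fin n)) (v : Fin n) : ℕ :=
  (E.filter (fun e => e.1 = v)).card

def indeg {n : ℕ} (E : Finset (Fin n × Fin n)) (v : Fin n) : ℕ :=
  (E.filter (fun e => e.2 = v)).card

/-- Number of edges in the directed cut from X to its complement. -/
def dicut {n : ℕ} (E : Finset (Fin n × Fin n)) (X : Finset (Fin n)) : ℕ :=
  (E.filter (fun e => e.1 ∈ X ∧ e.2 ∉ X)).card

/-- Number of edges entering X from its complement ("back edges" of the partition). -/
def bcutAux {n : ℕ} (E : Finset (Fin n × Fin n)) (X : Finset (Fin n)) : ℕ :=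
  (E.filter (fun e => e.1 ∉ X ∧ e.2 ∈ X)).card

lemma sum_outdeg_aux {n : ℕ} (E : Finset (Fin n × Fin n)) (X : Finset (Fin n)) :
    ∑ v ∈ X, outdeg E v = (E.filter fun e => e.1 ∈ X).card := by
  rw [Finset.card_eq_sum_card_fiberwise (f := Prod.fst) (t := X)
    (by intro e he; exact (Finset.mem_filter.1 (Finset.mem_coe.1 he)).2)]
  refine Finset.sum_congr rfl fun v hv => ?_
  rw [Finset.filter_filter]
  unfold outdeg
  congr 1
  apply Finset.filter_congr
  intro e _
  exact ⟨fun h => ⟨h ▸ hv, h⟩, fun h => h.2⟩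

lemma sum_indeg_aux {n : ℕ} (E : Finset (Fin n × Fin n)) (X : Finset (Fin n)) :
    ∑ v ∈ X, indeg E v = (E.filter fun e => e.2 ∈ X).card := by
  rw [Finset.card_eq_sum_card_fiberwise (f := Prod.snd) (t := X)
    (by intro e he; exact (Finset.mem_filter.1 (Finset.mem_coe.1 he)).2)]
  refine Finset.sum_congr rfl fun v hv => ?_
  rw [Finset.filter_filter]
  unfold indeg
  congr 1
  apply Finset.filter_congr
  intro e _
  exact ⟨fun h => ⟨h ▸ hv, h⟩, fun h => h.2⟩

lemma dicut_int_aux {n : ℕ} (E : Finset (Fin n × Fin n)) (X : Finset (Fin n)) :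
    (dicut E X : ℤ) = (∑ v ∈ X, ((outdeg E v : ℤ) - indeg E v)) + bcutAux E X := by
  have h1 : (E.filter fun e => e.1 ∈ X ∧ e.2 ∈ X).card + dicut E X
      = (E.filter fun e => e.1 ∈ X).card := by
    unfold dicut
    rw [← Finset.filter_filter, ← Finset.filter_filter,
      Finset.card_filter_add_card_filter_not]
  have h2 : (E.filter fun e => e.1 ∈ X ∧ e.2 ∈ X).card + bcutAux E X
      = (E.filter fun e => e.2 ∈ X).card := by
    unfold bcutAux
    have := Finset.card_filter_add_card_filter_not
      (s := E.filter fun e => e.2 ∈ X) (p := fun e => e.1 ∈ X)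
    rw [Finset.filter_filter, Finset.filter_filter] at this
    rw [← this]
    congr 1
    · congr 1; apply Finset.filter_congr; intro e _; simp [and_comm]
    · congr 1; apply Finset.filter_congr; intro e _; simp [and_comm]
  have hs : ∑ v ∈ X, ((outdeg E v : ℤ) - indeg E v)
      = ((∑ v ∈ X, outdeg E v : ℕ) : ℤ) - ((∑ v ∈ X, indeg E v : ℕ) : ℤ) := by
    push_cast
    rw [Finset.sum_sub_distrib]
  rw [hs, sum_outdeg_aux, sum_indeg_aux, ← h1, ← h2]
  push_cast
  ring

lemma swap_lt_aux {n : ℕ} {E : Finset (Fin n × Fin n)}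
    (htrans : ∀ u v w : Fin n, (u, v) ∈ E → (v, w) ∈ E → (u, w) ∈ E)
    (hanti : ∀ u v : Fin n, (u, v) ∈ E → (v, u) ∉ E)
    {X : Finset (Fin n)} {w v : Fin n} (hw : w ∉ X) (hv : v ∈ X)
    (he : (w, v) ∈ E) :
    dicut E X < dicut E (insert w (X.erase v)) := by
  have hwv : w ≠ v := fun h => hw (h ▸ hv)
  set X' : Finset (Fin n) := insert w (X.erase v) with hX'
  have memX' : ∀ a : Fin n, a ∈ X' ↔ a = w ∨ (a ∈ X ∧ a ≠ v) := by
    intro a; simp [hX', Finset.mem_insert, Finset.mem_erase, and_comm]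
  set S := E.filter (fun e => e.1 ∈ X ∧ e.2 ∉ X) with hS
  set T := E.filter (fun e => e.1 ∈ X' ∧ e.2 ∉ X') with hT
  set f : Fin n × Fin n → Fin n × Fin n :=
    fun e => if e.1 = v then (w, e.2) else if e.2 = w then (e.1, v) else e with hf
  set g : Fin n × Fin n → Fin n × Fin n :=
    fun e => if e.1 = w ∧ e.2 ≠ v then (v, e.2) else if e.2 = v ∧ e.1 ≠ w then (e.1, w) else e with hg
  have hwvS : (w, v) ∉ S := by
    simp [hS, Finset.mem_filter, hv]
  have hmaps : ∀ e ∈ insert (w, v) S, f e ∈ T := by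
    intro e hee
    rcases Finset.mem_insert.1 hee with rfl | heS
    · have : f (w, v) = (w, v) := by
        simp [hf, hwv, Ne.symm hwv]
      rw [this]
      simp only [hT, Finset.mem_filter]
      refine ⟨he, ?_, ?_⟩
      · rw [memX']; left; rfl
      · rw [memX']; push_neg; exact ⟨Ne.symm hwv, fun _ => rfl⟩
    · simp only [hS, Finset.mem_filter] at heS
      obtain ⟨heE, h1, h2⟩ := heS
      have h1w : e.1 ≠ w := fun h => hw (h ▸ h1)
      have h2v : e.2 ≠ v := fun h => h2 (h ▸ hv)
      by_cases hc1 : e.1 = v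
      · have hfe : f e = (w, e.2) := by simp [hf, hc1]
        have hedge : (w, e.2) ∈ E := by
          apply htrans w v e.2 he
          have : e = (e.1, e.2) := rfl
          rw [← hc1]; rw [← this]; exact heE
        have h2w : e.2 ≠ w := by
          intro h
          exact hanti w v he (by
            have : e = (v, w) := by rw [← hc1, ← h]
            rwa [this] at heE)
        rw [hfe]
        simp only [hT, Finset.mem_filter]
        refine ⟨hedge, ?_, ?_⟩
        · rw [memX']; left; rfl
        · rw [memX']; push_neg; exact ⟨h2w, fun hx => absurd hx h2⟩
      · by_cases hc2 : e.2 = w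
        · have hfe : f e = (e.1, v) := by simp [hf, hc1, hc2]
          have hedge : (e.1, v) ∈ E := by
            apply htrans e.1 w v _ he
            have : e = (e.1, e.2) := rfl
            rw [← hc2]; rw [← this]; exact heE
          rw [hfe]
          simp only [hT, Finset.mem_filter]
          refine ⟨hedge, ?_, ?_⟩
          · rw [memX']; right; exact ⟨h1, hc1⟩
          · rw [memX']; push_neg; exact ⟨Ne.symm hwv, fun _ => rfl⟩
        · have hfe : f e = e := by simp [hf, hc1, hc2]
          rw [hfe]
          simp only [hT, Finset.mem_filter]
          refine ⟨heE, ?_, ?_⟩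
          · rw [memX']; right; exact ⟨h1, hc1⟩
          · rw [memX']; push_neg; exact ⟨hc2, fun hx => absurd hx h2⟩
  have hgf : ∀ e ∈ insert (w, v) S, g (f e) = e := by
    intro e hee
    rcases Finset.mem_insert.1 hee with rfl | heS
    · have : f (w, v) = (w, v) := by simp [hf, hwv, Ne.symm hwv]
      rw [this]; simp [hg, hwv]
    · simp only [hS, Finset.mem_filter] at heS
      obtain ⟨heE, h1, h2⟩ := heS
      have h1w : e.1 ≠ w := fun h => hw (h ▸ h1)
      have h2v : e.2 ≠ v := fun h => h2 (h ▸ hv)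
      by_cases hc1 : e.1 = v
      · have hfe : f e = (w, e.2) := by simp [hf, hc1]
        rw [hfe]
        have : g (w, e.2) = (v, e.2) := by simp [hg, h2v]
        rw [this]
        ext <;> simp [hc1]
      · by_cases hc2 : e.2 = w
        · have hfe : f e = (e.1, v) := by simp [hf, hc1, hc2]
          rw [hfe]
          have : g (e.1, v) = (e.1, w) := by simp [hg, h1w]
          rw [this]
          ext <;> simp [hc2]
        · have hfe : f e = e := by simp [hf, hc1, hc2]
          rw [hfe]
          simp [hg, h1w, h2v]
  have hinj : Set.InjOn f (insert (w, v) S : Finset (Fin n × Fin n)) := by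
    intro a ha b hb hab
    have := hgf a (by simpa using ha)
    have h2 := hgf b (by simpa using hb)
    rw [← this, ← h2, hab]
  have hle : (insert (w, v) S).card ≤ T.card :=
    Finset.card_le_card_of_injOn f (by intro e he; exact hmaps e (Finset.mem_coe.1 he)) hinj
  rw [Finset.card_insert_of_notMem hwvS] at hle
  unfold dicut
  rw [← hS, ← hT]
  omega

lemma card_filter_lt_aux {n : ℕ} (σ : Equiv.Perm (Fin n)) (k : ℕ) :
    ((univ : Finset (Fin n)).filter fun v => (σ v : ℕ) < k).card = min k n := by
  have h : ∀ v ∈ (univ : Finset (Fin n)).filter (fun v => (σ v : ℕ) < k),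
      (σ v : ℕ) ∈ Finset.range (min k n) := by
    intro v hv
    simp only [Finset.mem_filter] at hv
    simp only [Finset.mem_range, lt_min_iff]
    exact ⟨hv.2, (σ v).isLt⟩
  rw [← Finset.card_range (min k n)]
  refine Finset.card_bij' (fun v _ => (σ v : ℕ))
    (fun m hm => σ.symm ⟨m, lt_of_lt_of_le (Finset.mem_range.1 hm) (min_le_right _ _)⟩)
    ?_ ?_ ?_ ?_
  · exact h
  · intro m hm
    simp only [Finset.mem_filter, Finset.mem_univ, true_and]
    rw [Equiv.apply_symm_apply]
    exact lt_of_lt_of_le (Finset.mem_range.1 hm) (min_le_left _ _)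
  · intro v hv
    simp
  · intro m hm
    simp [Equiv.apply_symm_apply]

lemma topk_aux {n : ℕ} (π : Equiv.Perm (Fin n)) (d : Fin n → ℤ)
    (hsort : ∀ u v : Fin n, (π u : ℕ) ≤ (π v : ℕ) → d v ≤ d u)
    (X : Finset (Fin n)) :
    ∑ v ∈ X, d v ≤ ∑ v ∈ (univ : Finset (Fin n)).filter (fun v => (π v : ℕ) < X.card), d v := by
  set T := (univ : Finset (Fin n)).filter (fun v => (π v : ℕ) < X.card) with hTdef
  have hXn : X.card ≤ n := by
    have := Finset.card_le_card (Finset.subset_univ X)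
    simpa using this
  have hT : T.card = X.card := by
    rw [hTdef, card_filter_lt_aux]
    omega
  have hsplitX : ∑ v ∈ X ∩ T, d v + ∑ v ∈ X \ T, d v = ∑ v ∈ X, d v :=
    Finset.sum_inter_add_sum_sdiff X T d
  have hsplitT : ∑ v ∈ T ∩ X, d v + ∑ v ∈ T \ X, d v = ∑ v ∈ T, d v :=
    Finset.sum_inter_add_sum_sdiff T X d
  have hcards : (X \ T).card = (T \ X).card := by
    have h1 : (X ∩ T).card + (X \ T).card = X.card := Finset.card_inter_add_card_sdiff X T
    have h2 : (T ∩ X).card + (T \ X).card = T.card := Finset.card_inter_add_card_sdiff T X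
    rw [Finset.inter_comm] at h2
    omega
  have key : ∑ v ∈ X \ T, d v ≤ ∑ v ∈ T \ X, d v := by
    rcases Finset.eq_empty_or_nonempty (T \ X) with hempty | hne
    · have : (X \ T) = ∅ := Finset.card_eq_zero.1 (by rw [hcards, hempty]; simp)
      rw [this, hempty]
    · obtain ⟨b, hb, hmin⟩ := Finset.exists_min_image (T \ X) d hne
      have hball : ∀ a ∈ X \ T, d a ≤ d b := by
        intro a ha
        simp only [Finset.mem_sdiff, hTdef, Finset.mem_filter, Finset.mem_univ, true_and] at ha hb
        apply hsort b a
        omega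
      calc ∑ v ∈ X \ T, d v ≤ (X \ T).card • d b := Finset.sum_le_card_nsmul _ _ _ hball
        _ = (T \ X).card • d b := by rw [hcards]
        _ ≤ ∑ v ∈ T \ X, d v := Finset.card_nsmul_le_sum _ _ _ hmin
  rw [← hsplitX, ← hsplitT, Finset.inter_comm]
  omega

/-- arranging a transitive acyclic digraph by non-increasing
d⁺(v) − d⁻(v) gives an arrangement whose signature coordinatewise dominates every
other signature, and each of its cuts is a maximum directed cut for its cardinality. -/
theorem stmt13 (n : ℕ) (E : Finset (Fin n × Fin n)) (hs : ∀ e ∈ E, e.1 ≠ e.2)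
    (htrans : ∀ u v w : Fin n, (u, v) ∈ E → (v, w) ∈ E → (u, w) ∈ E)
    (hanti : ∀ u v : Fin n, (u, v) ∈ E → (v, u) ∉ E)
    (π : Equiv.Perm (Fin n))
    (hsort : ∀ u v : Fin n, (π u : ℕ) ≤ (π v : ℕ) →
      (outdeg E v : ℤ) - (indeg E v : ℤ) ≤ (outdeg E u : ℤ) - (indeg E u : ℤ)) :
    (∀ (σ : Equiv.Perm (Fin n)) (k : ℕ), cutAt E σ k ≤ cutAt E π k) ∧
    (∀ X : Finset (Fin n), dicut E X ≤ cutAt E π X.card) := by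
  have hcut : ∀ (σ : Equiv.Perm (Fin n)) (k : ℕ),
      cutAt E σ k = dicut E ((univ : Finset (Fin n)).filter fun v => (σ v : ℕ) < k) := by
    intro σ k
    unfold cutAt dicut
    congr 1
    apply Finset.filter_congr
    intro e _
    simp [not_lt]
  have hnoback : ∀ X : Finset (Fin n), (∀ e ∈ E, ¬(e.1 ∉ X ∧ e.2 ∈ X)) →
      dicut E X ≤ dicut E ((univ : Finset (Fin n)).filter fun v => (π v : ℕ) < X.card) := by
    intro X hnb
    set T := (univ : Finset (Fin n)).filter fun v => (π v : ℕ) < X.card with hTdef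
    have hb0 : bcutAux E X = 0 := by
      unfold bcutAux
      rw [Finset.filter_false_of_mem hnb]
      exact Finset.card_empty
    have h1 := dicut_int_aux E X
    have h2 := dicut_int_aux E T
    have h3 := topk_aux π (fun v => (outdeg E v : ℤ) - indeg E v) hsort X
    have h4 : (0 : ℤ) ≤ bcutAux E T := Int.natCast_nonneg _
    have hz : (dicut E X : ℤ) ≤ (dicut E T : ℤ) := by
      rw [h1, h2, hb0]
      push_cast
      linarith
    exact_mod_cast hz
  have main : ∀ (fuel : ℕ) (X : Finset (Fin n)), E.card ≤ dicut E X + fuel →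
      dicut E X ≤ dicut E ((univ : Finset (Fin n)).filter fun v => (π v : ℕ) < X.card) := by
    intro fuel
    induction fuel with
    | zero =>
      intro X hX
      by_cases hb : ∃ e ∈ E, e.1 ∉ X ∧ e.2 ∈ X
      · obtain ⟨e, heE, h1, h2⟩ := hb
        have hlt : dicut E X < dicut E (insert e.1 (X.erase e.2)) :=
          swap_lt_aux htrans hanti h1 h2 (by rwa [Prod.mk.eta])
        have hle : dicut E (insert e.1 (X.erase e.2)) ≤ E.card := Finset.card_filter_le _ _
        omega
      · push_neg at hb
        exact hnoback X (by intro e he; rw [not_and]; intro h1 h2; exact (hb e he h1) h2)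
    | succ m ih =>
      intro X hX
      by_cases hb : ∃ e ∈ E, e.1 ∉ X ∧ e.2 ∈ X
      · obtain ⟨e, heE, h1, h2⟩ := hb
        set X' := insert e.1 (X.erase e.2) with hX'
        have hlt : dicut E X < dicut E X' :=
          swap_lt_aux htrans hanti h1 h2 (by rwa [Prod.mk.eta])
        have hcard' : X'.card = X.card := by
          rw [hX', Finset.card_insert_of_notMem
            (fun h => h1 (Finset.mem_of_mem_erase h)), Finset.card_erase_of_mem h2]
          have : 1 ≤ X.card := Finset.card_pos.2 ⟨e.2, h2⟩
          omega
        have hih := ih X' (by omega)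
        rw [hcard'] at hih
        omega
      · push_neg at hb
        exact hnoback X (by intro e he; rw [not_and]; intro h1 h2; exact (hb e he h1) h2)
  have part2 : ∀ X : Finset (Fin n), dicut E X ≤ cutAt E π X.card := by
    intro X
    rw [hcut π X.card]
    exact main E.card X (Nat.le_add_left _ _)
  refine ⟨?_, part2⟩
  intro σ k
  by_cases hk : k ≤ n
  · have hXc : ((univ : Finset (Fin n)).filter fun v => (σ v : ℕ) < k).card = k := by
      rw [card_filter_lt_aux]; omega
    calc cutAt E σ k = dicut E ((univ : Finset (Fin n)).filter fun v => (σ v : ℕ) < k) :=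
          hcut σ k
      _ ≤ cutAt E π ((univ : Finset (Fin n)).filter fun v => (σ v : ℕ) < k).card := part2 _
      _ = cutAt E π k := by rw [hXc]
  · have : cutAt E σ k = 0 := by
      unfold cutAt
      rw [Finset.filter_false_of_mem, Finset.card_empty]
      intro e he
      have := (σ e.2).isLt
      rw [not_and]
      intro _
      omega
    omega
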